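/- Suppose s and t are images of diversity indices of (T, ℓ) whose coefficient matrices agree on every column except the column of a single edge e ∈ E_f, and suppose the free parameter of column e for s is strictly between the minimum and maximum admissible values while for t¹ (resp. t²) it is maximum (resp. minimum). Then s is a strict convex combination of two distinct points t¹·type and t²·type of P(T, ℓ), hence s is not an extreme point of P(T, ℓ). -/

import Mathlib

/-- If the image s of a diversity index is obtained (via the affine map f from the
free parameter of the column of a single independent edge e ∈ E_f to score vectors,
all other columns being fixed) from a parameter value strictly between the minimum
lo and maximum hi admissible values, while t₁ and t₂ come from the maximum and
minimum values, and t₁ ≠ t₂, then s is a strict convex combination of the distinct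
points t₁, t₂ ∈ P(T,ℓ) and hence not an extreme point of P(T,ℓ). -/
theorem stmt_14 (n : ℕ) (P : Set (Fin n → ℝ))
    (lo hi : ℝ)
    (f : ℝ →ᵃ[ℝ] (Fin n → ℝ))           -- score vector as affine map of the free parameter
    (hrange : ∀ c ∈ Set.Icc lo hi, f c ∈ P)
    (c : ℝ) (hc : c ∈ Set.Ioo lo hi)
    (s t₁ t₂ : Fin n → ℝ)
    (hs : s = f c) (ht₁ : t₁ = f hi) (ht₂ : t₂ = f lo)
    (hne : t₁ ≠ t₂) :
    (∃ α : ℝ, 0 < α ∧ α < 1 ∧ s = α • t₁ + (1 - α) • t₂) ∧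
    s ∉ Set.extremePoints ℝ P := by
  obtain ⟨hlc, hch⟩ := hc
  have hlh : lo < hi := hlc.trans hch
  have hd : hi - lo ≠ 0 := by linarith
  set α : ℝ := (c - lo) / (hi - lo) with hα
  have hα0 : 0 < α := div_pos (by linarith) (by linarith)
  have hα1 : α < 1 := (div_lt_one (by linarith)).2 (by linarith)
  have hcl : c = AffineMap.lineMap lo hi α := by
    rw [AffineMap.lineMap_apply, hα]
    simp only [smul_eq_mul, vsub_eq_sub, vadd_eq_add]
    field_simp
    ring
  have hkey : s = α • t₁ + (1 - α) • t₂ := by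
    rw [hs, ht₁, ht₂, hcl, AffineMap.apply_lineMap]
    simp only [AffineMap.lineMap_apply, vsub_eq_sub, vadd_eq_add]
    module
  refine ⟨⟨α, hα0, hα1, hkey⟩, ?_⟩
  intro hext
  have h₁ : t₁ ∈ P := ht₁ ▸ hrange hi ⟨le_of_lt hlh, le_refl hi⟩
  have h₂ : t₂ ∈ P := ht₂ ▸ hrange lo ⟨le_refl lo, le_of_lt hlh⟩
  have hseg : s ∈ openSegment ℝ t₁ t₂ := ⟨α, 1 - α, hα0, by linarith, by ring, hkey.symm⟩
  have := hext.2 h₁ h₂ hseg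
  exact hne (this.trans (hext.2 h₂ h₁ (by rwa [openSegment_symm] at hseg)).symm)
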